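/- Let λ > 0, let D ∈ ℝ^{k×d}, let A = λ·I_d + Dᵀ D, let θ*, θ_S ∈ ℝ^d and ε ∈ ℝ^k, and define θ̂ = A^{−1} Dᵀ (D θ* + ε) − (A^{−1} Dᵀ D − I_d) θ_S. Then √( (θ̂ − θ*)ᵀ A (θ̂ − θ*) ) ≤ √( εᵀ D A^{−1} Dᵀ ε ) + √λ · ‖θ_S − θ*‖₂. -/

import Mathlib

open Matrix

lemma mulVec_dot_aux {m n : Type*} [Fintype m] [Fintype n]
    (M : Matrix m n ℝ) (y : n → ℝ) (x : m → ℝ) :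
    M.mulVec y ⬝ᵥ x = y ⬝ᵥ Mᵀ.mulVec x := by
  rw [dotProduct_comm, dotProduct_mulVec, dotProduct_comm, mulVec_transpose]

lemma dot_self_nonneg_aux {n : Type*} [Fintype n] (a : n → ℝ) : 0 ≤ a ⬝ᵥ a :=
  Finset.sum_nonneg fun i _ => mul_self_nonneg _

lemma dot_sqrt_triangle_aux {d : ℕ} (a b : Fin d → ℝ) :
    Real.sqrt ((a + b) ⬝ᵥ (a + b)) ≤ Real.sqrt (a ⬝ᵥ a) + Real.sqrt (b ⬝ᵥ b) := by
  have key : ∀ v : Fin d → ℝ,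
      Real.sqrt (v ⬝ᵥ v) = ‖(EuclideanSpace.equiv (Fin d) ℝ).symm v‖ := by
    intro v
    rw [EuclideanSpace.norm_eq]
    congr 1
    simp [dotProduct, Real.norm_eq_abs, sq_abs, sq]
  rw [key, key, key, map_add]
  exact norm_add_le _ _

theorem biased_estimator_confidence_bound {k d : ℕ} (lam : ℝ) (hlam : 0 < lam)
    (D : Matrix (Fin k) (Fin d) ℝ) (A : Matrix (Fin d) (Fin d) ℝ)
    (hA : A = lam • (1 : Matrix (Fin d) (Fin d) ℝ) + Dᵀ * D)
    (θstar θS : Fin d → ℝ) (ε : Fin k → ℝ)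
    (θhat : Fin d → ℝ)
    (hθhat : θhat = A⁻¹.mulVec (Dᵀ.mulVec (D.mulVec θstar + ε))
        - (A⁻¹ * Dᵀ * D - 1).mulVec θS) :
    Real.sqrt ((θhat - θstar) ⬝ᵥ A.mulVec (θhat - θstar))
      ≤ Real.sqrt (ε ⬝ᵥ (D * A⁻¹ * Dᵀ).mulVec ε)
        + Real.sqrt lam * Real.sqrt ((θS - θstar) ⬝ᵥ (θS - θstar)) := by
  have hM : (Dᵀ * D).PosSemidef := by
    have := posSemidef_conjTranspose_mul_self D
    simpa using this
  have hsmul : (lam • (1 : Matrix (Fin d) (Fin d) ℝ)).PosDef := by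
    rw [posDef_iff_dotProduct_mulVec]
    constructor
    · simp [Matrix.IsHermitian]
    · intro x hx
      have hxx : 0 < x ⬝ᵥ x := by
        have := dotProduct_star_self_pos_iff (v := x) |>.mpr hx
        simpa using this
      simp only [smul_mulVec, one_mulVec, dotProduct_smul, smul_eq_mul, star_trivial]
      positivity
  have hApd : A.PosDef := by rw [hA]; exact hsmul.add_posSemidef hM
  have hdet : IsUnit A.det := isUnit_iff_ne_zero.mpr hApd.det_pos.ne'
  have hAA : A * A⁻¹ = 1 := mul_nonsing_inv A hdet
  have hAAi : A⁻¹ * A = 1 := nonsing_inv_mul A hdet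
  have hAsymm : Aᵀ = A := by
    have := hApd.isHermitian
    simpa [Matrix.IsHermitian] using this
  have hAisymm : A⁻¹ᵀ = A⁻¹ := by
    rw [transpose_nonsing_inv, hAsymm]
  set s : Fin d → ℝ := θS - θstar with hs
  have hkey : A⁻¹ * Dᵀ * D - 1 = -(lam • A⁻¹) := by
    have hDD : Dᵀ * D = A - lam • 1 := by rw [hA]; abel
    rw [Matrix.mul_assoc, hDD, Matrix.mul_sub, hAAi, Matrix.mul_smul, Matrix.mul_one]
    abel
  have hx : θhat - θstar = A⁻¹.mulVec (Dᵀ.mulVec ε) + lam • A⁻¹.mulVec s := by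
    subst hθhat
    rw [hkey]
    have hDDθ : Dᵀ.mulVec (D.mulVec θstar) = A.mulVec θstar - lam • θstar := by
      have h : Dᵀ * D = A - lam • 1 := by rw [hA]; abel
      rw [mulVec_mulVec, h, sub_mulVec, smul_mulVec, one_mulVec]
    have hAiA : A⁻¹.mulVec (A.mulVec θstar) = θstar := by
      rw [mulVec_mulVec, hAAi, one_mulVec]
    rw [mulVec_add, mulVec_add, hDDθ, mulVec_sub, hAiA]
    simp only [neg_mulVec, smul_mulVec, mulVec_smul, hs]
    rw [mulVec_sub]
    module
  rw [hx]
  obtain ⟨S, hSsym', hS2⟩ : ∃ S : Matrix (Fin d) (Fin d) ℝ, Sᵀ = S ∧ S * S = A := by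
    open scoped MatrixOrder in
    refine ⟨CFC.sqrt A, ?_, ?_⟩
    · have := (CFC.sqrt_nonneg A).posSemidef.isHermitian
      simpa [Matrix.IsHermitian] using this
    · have := CFC.sq_sqrt A hApd.posSemidef.nonneg
      rwa [pow_two] at this
  have quad : ∀ v : Fin d → ℝ, v ⬝ᵥ A.mulVec v = (S.mulVec v) ⬝ᵥ (S.mulVec v) := by
    intro v
    rw [mulVec_dot_aux, hSsym', mulVec_mulVec, hS2]
  set u : Fin d → ℝ := A⁻¹.mulVec (Dᵀ.mulVec ε) with hu
  set w : Fin d → ℝ := lam • A⁻¹.mulVec s with hw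
  have h1 : Real.sqrt ((u + w) ⬝ᵥ A.mulVec (u + w))
      ≤ Real.sqrt (u ⬝ᵥ A.mulVec u) + Real.sqrt (w ⬝ᵥ A.mulVec w) := by
    rw [quad, quad, quad, mulVec_add]
    exact dot_sqrt_triangle_aux _ _
  refine h1.trans (add_le_add ?_ ?_)
  · have heq : u ⬝ᵥ A.mulVec u = ε ⬝ᵥ (D * A⁻¹ * Dᵀ).mulVec ε := by
      rw [hu, mulVec_mulVec, mulVec_dot_aux]
      rw [transpose_mul, hAisymm, transpose_transpose]
      rw [mulVec_mulVec, mulVec_mulVec]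
      congr 1
      rw [Matrix.mul_assoc D A⁻¹ A, hAAi, Matrix.mul_one, ← Matrix.mul_assoc]
    rw [heq]
  · have hMsym : (Dᵀ * D)ᵀ = Dᵀ * D := by
      rw [transpose_mul, transpose_transpose]
    have hAAexp : A * A = lam • A + (lam • (Dᵀ * D) + (Dᵀ * D) * (Dᵀ * D)) := by
      rw [hA]
      simp only [Matrix.add_mul, Matrix.mul_add, Matrix.smul_mul, Matrix.mul_smul,
        Matrix.one_mul, Matrix.mul_one, smul_smul]
    have e1 : ∀ z : Fin d → ℝ, z ⬝ᵥ (Dᵀ * D).mulVec z = (D.mulVec z) ⬝ᵥ (D.mulVec z) := by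
      intro z
      rw [← mulVec_mulVec]
      exact (mulVec_dot_aux D z (D.mulVec z)).symm
    have e2 : ∀ z : Fin d → ℝ, z ⬝ᵥ ((Dᵀ * D) * (Dᵀ * D)).mulVec z
        = ((Dᵀ * D).mulVec z) ⬝ᵥ ((Dᵀ * D).mulVec z) := by
      intro z
      rw [← mulVec_mulVec, mulVec_dot_aux, hMsym]
    have hbound : ∀ z : Fin d → ℝ,
        lam * (z ⬝ᵥ A.mulVec z) ≤ (A.mulVec z) ⬝ᵥ (A.mulVec z) := by
      intro z
      have hAz : (A.mulVec z) ⬝ᵥ (A.mulVec z) = z ⬝ᵥ (A * A).mulVec z := by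
        rw [mulVec_dot_aux, hAsymm, mulVec_mulVec]
      rw [hAz, hAAexp]
      simp only [add_mulVec, dotProduct_add, smul_mulVec, dotProduct_smul,
        smul_eq_mul, e1 z, e2 z]
      have n1 := dot_self_nonneg_aux (D.mulVec z)
      have n2 := dot_self_nonneg_aux ((Dᵀ * D).mulVec z)
      nlinarith
    have hsv : s = A.mulVec (A⁻¹.mulVec s) := by rw [mulVec_mulVec, hAA, one_mulVec]
    have hwA : w ⬝ᵥ A.mulVec w
        = lam * lam * ((A⁻¹.mulVec s) ⬝ᵥ A.mulVec (A⁻¹.mulVec s)) := by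
      rw [hw]
      simp only [smul_dotProduct, mulVec_smul, dotProduct_smul, smul_eq_mul]
      ring
    calc Real.sqrt (w ⬝ᵥ A.mulVec w) ≤ Real.sqrt (lam * (s ⬝ᵥ s)) := by
          apply Real.sqrt_le_sqrt
          rw [hwA]
          have hb := hbound (A⁻¹.mulVec s)
          have hss : s ⬝ᵥ s = (A.mulVec (A⁻¹.mulVec s)) ⬝ᵥ (A.mulVec (A⁻¹.mulVec s)) := by
            conv_lhs => rw [hsv]
          rw [hss]
          nlinarith
      _ = Real.sqrt lam * Real.sqrt (s ⬝ᵥ s) := Real.sqrt_mul hlam.le _
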